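/- In the renewal setup, let (W_k)_{k≥1} be an i.i.d. sequence of integrable real random variables on the same probability space with E[W₁] = w (no independence between (W_k) and (S(k)) is assumed). Then for each l ∈ {0, 1}, almost surely (1/t)·Σ_{k=1}^{N(t)+l} W_k → w/θ as t → ∞. -/

import Mathlib

open Set Filter MeasureTheory ProbabilityTheory Topology

/-- SLLN with sums over `Icc 1 n`, assuming iid-ness only for indices `≥ 1`. -/
lemma slln_icc {Ω : Type*} [MeasureSpace Ω] [IsProbabilityMeasure (ℙ : Measure Ω)]
    (X : ℕ → Ω → ℝ)
    (hindep : iIndepFun X ℙ)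
    (hident : ∀ k ≥ 1, IdentDistrib (X k) (X 1) ℙ ℙ)
    (hint : Integrable (X 1) ℙ) :
    ∀ᵐ ω ∂ℙ, Tendsto (fun n : ℕ => (∑ k ∈ Finset.Icc 1 n, X k ω) / n) atTop
      (𝓝 (∫ ω, X 1 ω ∂ℙ)) := by
  have h := strong_law_ae_real (fun i => X (i + 1)) hint
    (fun i j hij => hindep.indepFun (by omega))
    (fun i => hident (i + 1) (by omega))
  filter_upwards [h] with ω hω
  convert hω using 2 with n
  rw [← Finset.Ico_add_one_right_eq_Icc, Finset.sum_Ico_eq_sum_range]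
  simp [add_comm]

lemma renewal_Ntop {a : ℕ → ℝ} (hmono : Monotone a)
    {N : ℝ → ℕ} (hN : ∀ t ≥ (0:ℝ), a (N t) ≤ t ∧ t < a (N t + 1)) :
    Tendsto N atTop atTop := by
  refine tendsto_atTop.2 fun k => ?_
  filter_upwards [eventually_ge_atTop (max (a k) 0)] with t ht
  by_contra hk
  push_neg at hk
  have h2 := (hN t (le_trans (le_max_right _ _) ht)).2
  have h3 : a (N t + 1) ≤ a k := hmono (by omega)
  have : a (N t + 1) ≤ t := h3.trans (le_trans (le_max_left _ _) ht)
  linarith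

lemma nat_succ_div_tendsto : Tendsto (fun n : ℕ => ((n : ℝ) + 1) / n) atTop (𝓝 1) := by
  have h : Tendsto (fun n : ℕ => 1 + 1 / (n : ℝ)) atTop (𝓝 (1 + 0)) :=
    tendsto_const_nhds.add tendsto_one_div_atTop_nhds_zero_nat
  rw [add_zero] at h
  refine h.congr' ?_
  filter_upwards [eventually_ge_atTop 1] with n hn
  have : (n : ℝ) ≠ 0 := by positivity
  field_simp

lemma renewal_ratio {a : ℕ → ℝ} {θ : ℝ} (hθ : 0 < θ)
    (ha : Tendsto (fun n : ℕ => a n / n) atTop (𝓝 θ))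
    (hmono : Monotone a)
    {N : ℝ → ℕ} (hN : ∀ t ≥ (0:ℝ), a (N t) ≤ t ∧ t < a (N t + 1)) :
    Tendsto (fun t => (N t : ℝ) / t) atTop (𝓝 θ⁻¹) := by
  have hNtop := renewal_Ntop hmono hN
  have hNtop' : Tendsto (fun t => N t + 1) atTop atTop :=
    tendsto_atTop_mono (fun t => Nat.le_succ _) hNtop
  have hlow : Tendsto (fun t => a (N t) / (N t : ℝ)) atTop (𝓝 θ) := ha.comp hNtop
  have hupp : Tendsto (fun t => (a (N t + 1) / ((N t : ℝ) + 1)) * (((N t : ℝ) + 1) / (N t : ℝ)))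
      atTop (𝓝 (θ * 1)) := by
    refine Tendsto.mul ?_ (nat_succ_div_tendsto.comp hNtop)
    refine (ha.comp hNtop').congr fun t => ?_
    show a (N t + 1) / ((N t + 1 : ℕ) : ℝ) = _
    push_cast; ring
  rw [mul_one] at hupp
  have hmid : Tendsto (fun t => t / (N t : ℝ)) atTop (𝓝 θ) := by
    refine tendsto_of_tendsto_of_tendsto_of_le_of_le' hlow hupp ?_ ?_
    · filter_upwards [hNtop.eventually_ge_atTop 1, eventually_ge_atTop (0:ℝ)] with t h1 h0
      have hpos : (0:ℝ) < N t := by exact_mod_cast h1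
      gcongr
      exact (hN t h0).1
    · filter_upwards [hNtop.eventually_ge_atTop 1, eventually_ge_atTop (0:ℝ)] with t h1 h0
      have hpos : (0:ℝ) < N t := by exact_mod_cast h1
      have h1' : ((N t : ℝ)) ≠ 0 := ne_of_gt hpos
      have h2' : ((N t : ℝ)) + 1 ≠ 0 := by positivity
      have key : a (N t + 1) / ((N t : ℝ) + 1) * (((N t : ℝ) + 1) / (N t : ℝ))
          = a (N t + 1) / (N t : ℝ) := by field_simp
      rw [key]
      gcongr
      exact (hN t h0).2.le
  have := hmid.inv₀ (ne_of_gt hθ)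
  exact this.congr fun t => inv_div _ _

lemma renewal_combine {b : ℕ → ℝ} {w θ : ℝ}
    (hb : Tendsto (fun n : ℕ => b n / n) atTop (𝓝 w))
    {N : ℝ → ℕ} (hNtop : Tendsto N atTop atTop)
    (hNr : Tendsto (fun t => (N t : ℝ) / t) atTop (𝓝 θ⁻¹)) (l : ℕ) :
    Tendsto (fun t => b (N t + l) / t) atTop (𝓝 (w / θ)) := by
  have hNl : Tendsto (fun t => N t + l) atTop atTop :=
    tendsto_atTop_mono (fun t => Nat.le_add_right _ _) hNtop
  have h1 : Tendsto (fun t => b (N t + l) / ((N t + l : ℕ) : ℝ)) atTop (𝓝 w) := hb.comp hNl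
  have h2 : Tendsto (fun t => ((N t + l : ℕ) : ℝ) / t) atTop (𝓝 θ⁻¹) := by
    have hl0 : Tendsto (fun t : ℝ => (l : ℝ) / t) atTop (𝓝 0) :=
      tendsto_const_nhds.div_atTop tendsto_id
    have := hNr.add hl0
    rw [add_zero] at this
    refine this.congr fun t => ?_
    push_cast
    rw [add_div]
  have := h1.mul h2
  rw [← div_eq_mul_inv] at this
  refine this.congr' ?_
  filter_upwards [hNtop.eventually_ge_atTop 1, eventually_gt_atTop (0:ℝ)] with t h1' h0
  have hne : ((N t + l : ℕ) : ℝ) ≠ 0 := by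
    have h : 0 < N t + l := by omega
    positivity
  field_simp

/-- The renewal (arrival) times: `renewalTime S k ω = S 1 ω + ⋯ + S k ω`, with
`renewalTime S 0 ω = 0`. -/
noncomputable def renewalTime {Ω : Type*} (S : ℕ → Ω → ℝ) (k : ℕ) (ω : Ω) : ℝ :=
  ∑ j ∈ Finset.Icc 1 k, S j ω

/-- In the renewal setup, if `(W k)_{k ≥ 1}` is an i.i.d. integrable sequence with mean
`w` (no independence between `(W k)` and the dwell times `(S k)` is assumed), then for each
`l ∈ {0, 1}`, almost surely `(1/t) · Σ_{k=1}^{N(t)+l} W k → w / θ` as `t → ∞`. -/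
theorem stmt_6 {Ω : Type*} [MeasureSpace Ω] [IsProbabilityMeasure (ℙ : Measure Ω)]
    (S : ℕ → Ω → ℝ) (hSmeas : ∀ k, Measurable (S k))
    (hSindep : iIndepFun S ℙ)
    (hSident : ∀ k ≥ 1, IdentDistrib (S k) (S 1) ℙ ℙ)
    (hSpos : ∀ᵐ ω ∂ℙ, 0 < S 1 ω)
    (hSint : Integrable (S 1) ℙ)
    (θ : ℝ) (hθpos : 0 < θ) (hθ : (∫ ω, S 1 ω ∂ℙ) = θ)
    (N : ℝ → Ω → ℕ)
    (hN : ∀ᵐ ω ∂ℙ, ∀ t ≥ (0 : ℝ),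
      renewalTime S (N t ω) ω ≤ t ∧ t < renewalTime S (N t ω + 1) ω)
    (W : ℕ → Ω → ℝ) (hWmeas : ∀ k, Measurable (W k))
    (hWindep : iIndepFun W ℙ)
    (hWident : ∀ k ≥ 1, IdentDistrib (W k) (W 1) ℙ ℙ)
    (hWint : Integrable (W 1) ℙ)
    (w : ℝ) (hw : (∫ ω, W 1 ω ∂ℙ) = w) :
    ∀ l ∈ ({0, 1} : Set ℕ),
      ∀ᵐ ω ∂ℙ,
        Filter.Tendsto (fun t : ℝ => (∑ k ∈ Finset.Icc 1 (N t ω + l), W k ω) / t)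
          Filter.atTop (nhds (w / θ)) := by
  intro l hl
  have hbW := slln_icc W hWindep hWident hWint
  have haS := slln_icc S hSindep hSident hSint
  have hpos : ∀ᵐ ω ∂ℙ, ∀ k, 1 ≤ k → 0 < S k ω := by
    rw [ae_all_iff]
    intro k
    by_cases hk : 1 ≤ k
    · have := (hSident k hk).symm.ae_snd (p := fun x => 0 < x) measurableSet_Ioi hSpos
      filter_upwards [this] with ω h _
      exact h
    · filter_upwards with ω h; omega
  filter_upwards [hbW, haS, hpos, hN] with ω hbω haω hposω hNω
  rw [hw] at hbω
  rw [hθ] at haω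
  have hmono : Monotone (fun k => renewalTime S k ω) := by
    intro m n hmn
    refine Finset.sum_le_sum_of_subset_of_nonneg (Finset.Icc_subset_Icc_right hmn) ?_
    intro i hi _
    exact (hposω i (Finset.mem_Icc.mp hi).1).le
  have hratio := renewal_ratio hθpos haω hmono hNω
  have hNtop := renewal_Ntop hmono hNω
  exact renewal_combine hbω hNtop hratio l
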